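/- Let K have characteristic 0, let r, s ∈ K* with r ≠ 1, s ≠ 1, such that rⁱsʲ = 1 implies i = j = 0, set α = r+s, β = −rs, and let n = 1 with parameter t. Then for any λ₁, λ₂, a ∈ K* and b ∈ K satisfying λ₁λ₂·φ(t) = φ(at+b), the assignment d ↦ λ₁d, u ↦ λ₂u, t ↦ at+b extends to a K-algebra automorphism of the down-up algebra A(α,β,φ). -/

import Mathlib

open MvPolynomial

namespace DownUp

inductive Gen | u | d

variable {K : Type} [Field K] {n : ℕ}

/-- Free algebra over the polynomial base ring on generators u, d. -/
abbrev F (K : Type) [Field K] (n : ℕ) := FreeAlgebra (MvPolynomial (Fin n) K) Gen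

noncomputable def uF : F K n := FreeAlgebra.ι _ Gen.u
noncomputable def dF : F K n := FreeAlgebra.ι _ Gen.d

/-- The defining relations of the down-up algebra over K[t₁,…,tₙ]. -/
inductive Rel (α β : K) (φ : MvPolynomial (Fin n) K) : F K n → F K n → Prop
  | ddu : Rel α β φ (dF * dF * uF)
      (α • (dF * uF * dF) + β • (uF * dF * dF) + algebraMap _ _ φ * dF)
  | duu : Rel α β φ (dF * uF * uF)
      (α • (uF * dF * uF) + β • (uF * uF * dF) + uF * algebraMap _ _ φ)

/-- The down-up algebra A(α,β,φ) over K[t₁,…,tₙ]. -/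
abbrev A (α β : K) (φ : MvPolynomial (Fin n) K) := RingQuot (Rel α β φ)

noncomputable def U (α β : K) (φ : MvPolynomial (Fin n) K) : A α β φ :=
  RingQuot.mkAlgHom K _ uF
noncomputable def D (α β : K) (φ : MvPolynomial (Fin n) K) : A α β φ :=
  RingQuot.mkAlgHom K _ dF

/-- Image of the base polynomial ring in A. -/
noncomputable def T (α β : K) (φ : MvPolynomial (Fin n) K) :
    MvPolynomial (Fin n) K →ₐ[K] A α β φ :=
  (RingQuot.mkAlgHom K (Rel α β φ)).comp (IsScalarTower.toAlgHom K (MvPolynomial (Fin n) K) (F K n))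

end DownUp




namespace DUAux
open DownUp

variable {K : Type} [Field K] {n : ℕ}

theorem T_central (α β : K) (φ : MvPolynomial (Fin n) K) (p : MvPolynomial (Fin n) K)
    (x : A α β φ) : T α β φ p * x = x * T α β φ p := by
  obtain ⟨y, rfl⟩ := RingQuot.mkAlgHom_surjective K (Rel α β φ) x
  show RingQuot.mkAlgHom K (Rel α β φ) (algebraMap (MvPolynomial (Fin n) K) (F K n) p) *
      RingQuot.mkAlgHom K (Rel α β φ) y = _
  rw [← map_mul, Algebra.commutes, map_mul]
  rfl

noncomputable def liftF (α β : K) (φ : MvPolynomial (Fin n) K) (lam₁ lam₂ : K)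
    (σ : MvPolynomial (Fin n) K →ₐ[K] A α β φ)
    (hσ : ∀ p x, σ p * x = x * σ p) : F K n →ₐ[K] A α β φ :=
  letI : Algebra (MvPolynomial (Fin n) K) (A α β φ) := RingHom.toAlgebra' σ.toRingHom hσ
  let f : F K n →ₐ[MvPolynomial (Fin n) K] A α β φ :=
    FreeAlgebra.lift (MvPolynomial (Fin n) K)
      (fun x => match x with | Gen.u => lam₂ • U α β φ | Gen.d => lam₁ • D α β φ)
  { toRingHom := f.toRingHom,
    commutes' := fun k => by
      show f (algebraMap K (F K n) k) = algebraMap K (A α β φ) k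
      rw [IsScalarTower.algebraMap_apply K (MvPolynomial (Fin n) K) (F K n) k, f.commutes]
      exact σ.commutes k }

theorem liftF_u (α β : K) (φ : MvPolynomial (Fin n) K) (lam₁ lam₂ : K)
    (σ : MvPolynomial (Fin n) K →ₐ[K] A α β φ) (hσ : ∀ p x, σ p * x = x * σ p) :
    liftF α β φ lam₁ lam₂ σ hσ uF = lam₂ • U α β φ := by
  letI : Algebra (MvPolynomial (Fin n) K) (A α β φ) := RingHom.toAlgebra' σ.toRingHom hσ
  exact FreeAlgebra.lift_ι_apply (R := MvPolynomial (Fin n) K)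
    (fun x => match x with | Gen.u => lam₂ • U α β φ | Gen.d => lam₁ • D α β φ) Gen.u

theorem liftF_d (α β : K) (φ : MvPolynomial (Fin n) K) (lam₁ lam₂ : K)
    (σ : MvPolynomial (Fin n) K →ₐ[K] A α β φ) (hσ : ∀ p x, σ p * x = x * σ p) :
    liftF α β φ lam₁ lam₂ σ hσ dF = lam₁ • D α β φ := by
  letI : Algebra (MvPolynomial (Fin n) K) (A α β φ) := RingHom.toAlgebra' σ.toRingHom hσ
  exact FreeAlgebra.lift_ι_apply (R := MvPolynomial (Fin n) K)
    (fun x => match x with | Gen.u => lam₂ • U α β φ | Gen.d => lam₁ • D α β φ) Gen.d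

theorem liftF_algebraMap (α β : K) (φ : MvPolynomial (Fin n) K) (lam₁ lam₂ : K)
    (σ : MvPolynomial (Fin n) K →ₐ[K] A α β φ) (hσ : ∀ p x, σ p * x = x * σ p)
    (p : MvPolynomial (Fin n) K) :
    liftF α β φ lam₁ lam₂ σ hσ (algebraMap (MvPolynomial (Fin n) K) (F K n) p) = σ p := by
  letI : Algebra (MvPolynomial (Fin n) K) (A α β φ) := RingHom.toAlgebra' σ.toRingHom hσ
  exact (FreeAlgebra.lift (MvPolynomial (Fin n) K)
      (fun x => match x with | Gen.u => lam₂ • U α β φ | Gen.d => lam₁ • D α β φ)).commutes p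

end DUAux

namespace DUAux
open DownUp

variable {K : Type} [Field K] {n : ℕ}

theorem relD (α β : K) (φ : MvPolynomial (Fin n) K) :
    D α β φ * D α β φ * U α β φ =
      α • (D α β φ * U α β φ * D α β φ) + β • (U α β φ * D α β φ * D α β φ) +
        T α β φ φ * D α β φ := by
  have h := RingQuot.mkAlgHom_rel K (Rel.ddu (α := α) (β := β) (φ := φ))
  simpa only [map_mul, map_add, map_smul, U, D, T, AlgHom.comp_apply,
    IsScalarTower.coe_toAlgHom'] using h

theorem relU (α β : K) (φ : MvPolynomial (Fin n) K) :
    D α β φ * U α β φ * U α β φ =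
      α • (U α β φ * D α β φ * U α β φ) + β • (U α β φ * U α β φ * D α β φ) +
        U α β φ * T α β φ φ := by
  have h := RingQuot.mkAlgHom_rel K (Rel.duu (α := α) (β := β) (φ := φ))
  simpa only [map_mul, map_add, map_smul, U, D, T, AlgHom.comp_apply,
    IsScalarTower.coe_toAlgHom'] using h

noncomputable def endo (α β : K) (φ : MvPolynomial (Fin n) K) (lam₁ lam₂ : K)
    (g : MvPolynomial (Fin n) K →ₐ[K] MvPolynomial (Fin n) K)
    (hT : T α β φ (g φ) = (lam₁ * lam₂) • T α β φ φ) : A α β φ →ₐ[K] A α β φ :=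
  RingQuot.liftAlgHom K
    ⟨liftF α β φ lam₁ lam₂ ((T α β φ).comp g) (fun p x => show ((T α β φ).comp g) p * x = x * ((T α β φ).comp g) p from T_central α β φ (g p) x), by
      intro x y h
      cases h with
      | ddu =>
        simp only [map_mul, map_add, map_smul, liftF_u, liftF_d, liftF_algebraMap,
          AlgHom.comp_apply, hT, Algebra.smul_mul_assoc, Algebra.mul_smul_comm, smul_smul]
        rw [relD α β φ]
        match_scalars <;> ring
      | duu =>
        simp only [map_mul, map_add, map_smul, liftF_u, liftF_d, liftF_algebraMap,
          AlgHom.comp_apply, hT, Algebra.smul_mul_assoc, Algebra.mul_smul_comm, smul_smul]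
        rw [relU α β φ]
        match_scalars <;> ring⟩

theorem endo_D (α β : K) (φ : MvPolynomial (Fin n) K) (lam₁ lam₂ : K)
    (g : MvPolynomial (Fin n) K →ₐ[K] MvPolynomial (Fin n) K)
    (hT : T α β φ (g φ) = (lam₁ * lam₂) • T α β φ φ) :
    endo α β φ lam₁ lam₂ g hT (D α β φ) = lam₁ • D α β φ := by
  rw [endo, D, RingQuot.liftAlgHom_mkAlgHom_apply, liftF_d]
  rfl

theorem endo_U (α β : K) (φ : MvPolynomial (Fin n) K) (lam₁ lam₂ : K)
    (g : MvPolynomial (Fin n) K →ₐ[K] MvPolynomial (Fin n) K)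
    (hT : T α β φ (g φ) = (lam₁ * lam₂) • T α β φ φ) :
    endo α β φ lam₁ lam₂ g hT (U α β φ) = lam₂ • U α β φ := by
  rw [endo, U, RingQuot.liftAlgHom_mkAlgHom_apply, liftF_u]
  rfl

theorem endo_T (α β : K) (φ : MvPolynomial (Fin n) K) (lam₁ lam₂ : K)
    (g : MvPolynomial (Fin n) K →ₐ[K] MvPolynomial (Fin n) K)
    (hT : T α β φ (g φ) = (lam₁ * lam₂) • T α β φ φ) (p : MvPolynomial (Fin n) K) :
    endo α β φ lam₁ lam₂ g hT (T α β φ p) = T α β φ (g p) := by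
  have hTp : T α β φ p =
      RingQuot.mkAlgHom K (Rel α β φ) (algebraMap (MvPolynomial (Fin n) K) (F K n) p) := rfl
  rw [hTp, endo, RingQuot.liftAlgHom_mkAlgHom_apply, liftF_algebraMap, AlgHom.comp_apply]

end DUAux

namespace DUAux
open DownUp

variable {K : Type} [Field K] {n : ℕ}

theorem endo_comp_id (α β : K) (φ : MvPolynomial (Fin n) K) (lam₁ lam₂ μ₁ μ₂ : K)
    (g g' : MvPolynomial (Fin n) K →ₐ[K] MvPolynomial (Fin n) K)
    (hT : T α β φ (g φ) = (lam₁ * lam₂) • T α β φ φ)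
    (hT' : T α β φ (g' φ) = (μ₁ * μ₂) • T α β φ φ)
    (hl₁ : lam₁ * μ₁ = 1) (hl₂ : lam₂ * μ₂ = 1)
    (hg : ∀ p, g' (g p) = p) (z : A α β φ) :
    endo α β φ μ₁ μ₂ g' hT' (endo α β φ lam₁ lam₂ g hT z) = z := by
  obtain ⟨x, rfl⟩ := RingQuot.mkAlgHom_surjective K (Rel α β φ) z
  induction x using FreeAlgebra.induction with
  | grade0 p =>
      show endo α β φ μ₁ μ₂ g' hT' (endo α β φ lam₁ lam₂ g hT (T α β φ p)) = T α β φ p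
      rw [endo_T, endo_T, hg]
  | grade1 i =>
      cases i with
      | u =>
          show endo α β φ μ₁ μ₂ g' hT' (endo α β φ lam₁ lam₂ g hT (U α β φ)) = U α β φ
          rw [endo_U, map_smul, endo_U, smul_smul, hl₂, one_smul]
      | d =>
          show endo α β φ μ₁ μ₂ g' hT' (endo α β φ lam₁ lam₂ g hT (D α β φ)) = D α β φ
          rw [endo_D, map_smul, endo_D, smul_smul, hl₁, one_smul]
  | mul x y hx hy => simp only [map_mul, hx, hy]
  | add x y hx hy => simp only [map_add, hx, hy]

end DUAux

open DownUp MvPolynomial in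
/-- Let char K = 0, r, s ∈ K* with r, s ≠ 1 and no multiplicative relations
(rⁱsʲ = 1 ⟹ i = j = 0), α = r + s, β = −rs, n = 1 (parameter t = X 0). For any
λ₁, λ₂, a ∈ K*, b ∈ K with λ₁λ₂·φ(t) = φ(at + b), the assignment d ↦ λ₁d,
u ↦ λ₂u, t ↦ at + b extends to a K-algebra automorphism of A(α,β,φ). -/
theorem downUp_automorphism {K : Type} [Field K] [CharZero K]
    (r s : K) (hr : r ≠ 0) (hs : s ≠ 0) (hr1 : r ≠ 1) (hs1 : s ≠ 1)
    (hrs : ∀ i j : ℤ, r ^ i * s ^ j = 1 → i = 0 ∧ j = 0)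
    (φ : MvPolynomial (Fin 1) K)
    (lam₁ lam₂ a : K) (b : K) (h₁ : lam₁ ≠ 0) (h₂ : lam₂ ≠ 0) (ha : a ≠ 0)
    (hφ : (lam₁ * lam₂) • φ = aeval (fun _ : Fin 1 => C a * X 0 + C b) φ) :
    let α := r + s
    let β := -(r * s)
    ∃ e : A α β φ ≃ₐ[K] A α β φ,
      e (D α β φ) = lam₁ • D α β φ ∧
      e (U α β φ) = lam₂ • U α β φ ∧
      e (T α β φ (X 0)) = a • T α β φ (X 0) + algebraMap K (A α β φ) b := by
  intro α β
  set g₁ : MvPolynomial (Fin 1) K →ₐ[K] MvPolynomial (Fin 1) K :=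
    aeval (fun _ : Fin 1 => C a * X 0 + C b) with hg₁
  set g₂ : MvPolynomial (Fin 1) K →ₐ[K] MvPolynomial (Fin 1) K :=
    aeval (fun _ : Fin 1 => C a⁻¹ * X 0 - C (a⁻¹ * b)) with hg₂
  -- g₂ is a left inverse of g₁
  have hcomp : ∀ p, g₂ (g₁ p) = p := by
    intro p
    rw [hg₁, hg₂, ← AlgHom.comp_apply, MvPolynomial.comp_aeval]
    have hfun : (fun i : Fin 1 =>
        aeval (fun _ : Fin 1 => C a⁻¹ * X 0 - C (a⁻¹ * b)) ((C a : MvPolynomial (Fin 1) K) * X 0 + C b))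
        = (X : Fin 1 → MvPolynomial (Fin 1) K) := by
      funext i
      have hi : i = 0 := Subsingleton.elim _ _
      subst hi
      simp only [map_add, map_mul, aeval_C, aeval_X, algebraMap_eq, map_sub]
      have h1 : (C a : MvPolynomial (Fin 1) K) * C a⁻¹ = 1 := by
        rw [← C_mul, mul_inv_cancel₀ ha, C_1]
      have h2 : (C a : MvPolynomial (Fin 1) K) * C (a⁻¹ * b) = C b := by
        rw [← C_mul, ← mul_assoc, mul_inv_cancel₀ ha, one_mul]
      linear_combination (X 0 - C b : MvPolynomial (Fin 1) K) * h1
    rw [hfun, aeval_X_left]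
    rfl
  have hcomp' : ∀ p, g₁ (g₂ p) = p := by
    intro p
    rw [hg₁, hg₂, ← AlgHom.comp_apply, MvPolynomial.comp_aeval]
    have hfun : (fun i : Fin 1 =>
        aeval (fun _ : Fin 1 => C a * X 0 + C b) ((C a⁻¹ : MvPolynomial (Fin 1) K) * X 0 - C (a⁻¹ * b)))
        = (X : Fin 1 → MvPolynomial (Fin 1) K) := by
      funext i
      have hi : i = 0 := Subsingleton.elim _ _
      subst hi
      simp only [map_add, map_mul, aeval_C, aeval_X, algebraMap_eq, map_sub]
      have h1 : (C a⁻¹ : MvPolynomial (Fin 1) K) * C a = 1 := by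
        rw [← C_mul, inv_mul_cancel₀ ha, C_1]
      have h2 : (C a⁻¹ : MvPolynomial (Fin 1) K) * C b = C (a⁻¹ * b) := by
        rw [← C_mul]
      linear_combination (X 0 : MvPolynomial (Fin 1) K) * h1
    rw [hfun, aeval_X_left]
    rfl
  -- the scalar conditions
  have hT₁ : T α β φ (g₁ φ) = (lam₁ * lam₂) • T α β φ φ := by
    rw [hg₁, ← hφ, map_smul]
  have hg₂φ : g₂ φ = (lam₁⁻¹ * lam₂⁻¹) • φ := by
    have := hcomp φ
    rw [hg₁] at this
    rw [← hφ, map_smul] at this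
    have hne : lam₁ * lam₂ ≠ 0 := mul_ne_zero h₁ h₂
    calc g₂ φ = (lam₁⁻¹ * lam₂⁻¹) • ((lam₁ * lam₂) • g₂ φ) := by
          rw [smul_smul]
          rw [show lam₁⁻¹ * lam₂⁻¹ * (lam₁ * lam₂) = (lam₁⁻¹ * lam₁) * (lam₂⁻¹ * lam₂) by ring,
            inv_mul_cancel₀ h₁, inv_mul_cancel₀ h₂, one_mul, one_smul]
      _ = (lam₁⁻¹ * lam₂⁻¹) • φ := by rw [this]
  have hT₂ : T α β φ (g₂ φ) = (lam₁⁻¹ * lam₂⁻¹) • T α β φ φ := by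
    rw [hg₂φ, map_smul]
  -- the two endomorphisms
  refine ⟨AlgEquiv.ofAlgHom (DUAux.endo α β φ lam₁ lam₂ g₁ hT₁) (DUAux.endo α β φ lam₁⁻¹ lam₂⁻¹ g₂ hT₂)
      (AlgHom.ext fun z => ?_) (AlgHom.ext fun z => ?_), ?_, ?_, ?_⟩
  · exact DUAux.endo_comp_id α β φ lam₁⁻¹ lam₂⁻¹ lam₁ lam₂ g₂ g₁ hT₂ hT₁
      (inv_mul_cancel₀ h₁) (inv_mul_cancel₀ h₂) hcomp' z
  · exact DUAux.endo_comp_id α β φ lam₁ lam₂ lam₁⁻¹ lam₂⁻¹ g₁ g₂ hT₁ hT₂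
      (mul_inv_cancel₀ h₁) (mul_inv_cancel₀ h₂) hcomp z
  · show DUAux.endo α β φ lam₁ lam₂ g₁ hT₁ (D α β φ) = lam₁ • D α β φ
    exact DUAux.endo_D α β φ lam₁ lam₂ g₁ hT₁
  · show DUAux.endo α β φ lam₁ lam₂ g₁ hT₁ (U α β φ) = lam₂ • U α β φ
    exact DUAux.endo_U α β φ lam₁ lam₂ g₁ hT₁
  · show DUAux.endo α β φ lam₁ lam₂ g₁ hT₁ (T α β φ (X 0)) = _
    rw [DUAux.endo_T]
    have : g₁ (X 0) = C a * X 0 + C b := by rw [hg₁]; simp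
    rw [this, map_add, map_mul]
    have hCa : T α β φ (C a) = algebraMap K (A α β φ) a := by
      rw [← MvPolynomial.algebraMap_eq]; exact (T α β φ).commutes a
    have hCb : T α β φ (C b) = algebraMap K (A α β φ) b := by
      rw [← MvPolynomial.algebraMap_eq]; exact (T α β φ).commutes b
    rw [hCa, hCb, ← Algebra.smul_def]
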